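/- Let k ≥ 3 be a fixed integer and let D be a digraph without loops or parallel arcs that does not contain any digraph in 𝒞_k ∪ 𝒞′_k as a subdigraph. Then for any vertex v ∈ V(D), the digraph D′ obtained from D by cloning v does not contain any digraph in 𝒞_k ∪ 𝒞′_k as a subdigraph either. -/

import Mathlib

/-- A digraph `D` (given by its arc relation `E`) contains the digraph given by the
arc relation `F` as a subdigraph: there is an injective map of the vertices preserving arcs. -/
def ContainsDigraph {V W : Type*} (E : V → V → Prop) (F : W → W → Prop) : Prop :=
  ∃ f : W → V, Function.Injective f ∧ ∀ u v : W, F u v → E (f u) (f v)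

/-- The orientation of the `k`-cycle determined by `o : ZMod k → Bool`:
the edge `i` of the cycle joins `i` and `i + 1`, and is oriented `i → i + 1`
when `o i = true`, and `i + 1 → i` when `o i = false`. -/
def cycleOrient {k : ℕ} (o : ZMod k → Bool) : ZMod k → ZMod k → Prop :=
  fun u v => (o u = true ∧ v = u + 1) ∨ (o v = false ∧ u = v + 1)

/-- The arc obtained by orienting the edge `i` of the `k`-cycle according to `o`.
Injectivity of `cycleArc o` says that distinct edges yield distinct arcs, i.e. the
orientation is a genuine digraph without parallel arcs (this is automatic for `k ≥ 3`). -/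
def cycleArc {k : ℕ} (o : ZMod k → Bool) (i : ZMod k) : ZMod k × ZMod k :=
  if o i then (i, i + 1) else (i + 1, i)

open Classical in
/-- The number of blocks of the orientation of the `k`-cycle given by `o`:
a directed cycle has a single block, and otherwise the blocks (maximal directed
subpaths) correspond bijectively to the indices `i` at which the orientation
changes between the consecutive edges `i` and `i + 1`. -/
noncomputable def blockCount {k : ℕ} (o : ZMod k → Bool) : ℕ :=
  if ∀ i, o i = o 0 then 1 else {i : ZMod k | o i ≠ o (i + 1)}.ncard

/-- The orientation of the `k`-cycle given by `o` has a block of length one, i.e.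
some edge `i + 1` is a maximal directed subpath on its own. -/
def hasShortBlock {k : ℕ} (o : ZMod k → Bool) : Prop :=
  ∃ i : ZMod k, o i ≠ o (i + 1) ∧ o (i + 1) ≠ o (i + 2)

/-- The digraph given by the arc relation `E` contains, as a subdigraph, a member of
`𝒞_k ∪ 𝒞'_k`: i.e. an orientation of a cycle of length `ℓ` with `2 ≤ ℓ ≤ k` (a genuine
digraph, whence the injectivity of `cycleArc o`) which either is a directed cycle
(a single block) or consists of exactly two blocks, one of which has length one. -/
def ContainsFamilyCk (k : ℕ) {V : Type*} (E : V → V → Prop) : Prop :=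
  ∃ (ℓ : ℕ) (o : ZMod ℓ → Bool), 2 ≤ ℓ ∧ ℓ ≤ k ∧
    Function.Injective (cycleArc o) ∧
    (blockCount o = 1 ∨ (blockCount o = 2 ∧ hasShortBlock o)) ∧
    ContainsDigraph E (cycleOrient o)

/-- The digraph obtained from `E` by cloning the vertex `v`: the new vertex (`none`) has
the same in- and out-neighbourhood as `v`, and is not adjacent to `v`. -/
def cloneRel {V : Type*} (E : V → V → Prop) (v : V) : Option V → Option V → Prop
  | some a, some b => E a b
  | some a, none => E a v
  | none, some b => E v b
  | none, none => False

lemma cloneRel_getD {V : Type*} {E : V → V → Prop} {v : V} {x y : Option V}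
    (h : cloneRel E v x y) : E (x.getD v) (y.getD v) := by
  cases x <;> cases y <;> simp [cloneRel] at h ⊢ <;> assumption

lemma natCast_zmod_inj {ℓ : ℕ} {s t : ℕ} (hs : s < ℓ) (ht : t < ℓ)
    (h : (s : ZMod ℓ) = t) : s = t := by
  haveI : NeZero ℓ := ⟨by omega⟩
  have := congrArg ZMod.val h
  rwa [ZMod.val_cast_of_lt hs, ZMod.val_cast_of_lt ht] at this

lemma val_natCast_eq {ℓ : ℕ} [NeZero ℓ] (x : ZMod ℓ) : ((x.val : ℕ) : ZMod ℓ) = x := by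
  simp [ZMod.natCast_val, ZMod.cast_id]

/-- Constant orientations give directed cycles in the family. -/
lemma subcycle {V : Type*} (E : V → V → Prop) (v : V) (k ℓ : ℕ) [NeZero ℓ]
    (o : ZMod ℓ → Bool) (f : ZMod ℓ → Option V)
    (hf : Function.Injective f)
    (harc : ∀ u w, cycleOrient o u w → cloneRel E v (f u) (f w))
    (s : ZMod ℓ) (d : ℕ) (c : Bool) (hd2 : 2 ≤ d) (hdl : d < ℓ) (hdk : d ≤ k)
    (hend0 : (f s).getD v = v) (hend1 : (f (s + (d : ℕ))).getD v = v)
    (hmid : ∀ t : ℕ, 0 < t → t < d → f (s + (t : ℕ)) ≠ none ∧ f (s + (t : ℕ)) ≠ some v)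
    (hc : ∀ t : ℕ, t < d → o (s + (t : ℕ)) = c) :
    ContainsFamilyCk k E := by
  haveI : NeZero d := ⟨by omega⟩
  set g : ZMod d → V := fun j => (f (s + (j.val : ℕ))).getD v with hg
  have gval : ∀ j : ZMod d, j ≠ 0 → ∃ x, f (s + (j.val : ℕ)) = some x ∧ x ≠ v := by
    intro j hj
    have hjv : 0 < j.val := by
      rcases Nat.eq_zero_or_pos j.val with h | h
      · exact absurd ((ZMod.val_eq_zero j).mp h) hj
      · exact h
    obtain ⟨h1, h2⟩ := hmid j.val hjv (ZMod.val_lt j)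
    rcases hx : f (s + (j.val : ℕ)) with _ | x
    · exact absurd hx h1
    · exact ⟨x, rfl, fun hxv => h2 (by rw [hx, hxv])⟩
  have g0 : g 0 = v := by
    simp only [hg, ZMod.val_zero, Nat.cast_zero, add_zero]
    exact hend0
  have ginj : Function.Injective g := by
    intro j j' h
    by_cases hj : j = 0 <;> by_cases hj' : j' = 0
    · rw [hj, hj']
    · obtain ⟨x, hx, hxv⟩ := gval j' hj'
      rw [hj, g0] at h
      simp only [hg, hx, Option.getD_some] at h
      exact absurd h.symm hxv
    · obtain ⟨x, hx, hxv⟩ := gval j hj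
      rw [hj', g0] at h
      simp only [hg, hx, Option.getD_some] at h
      exact absurd h hxv
    · obtain ⟨x, hx, hxv⟩ := gval j hj
      obtain ⟨x', hx', hxv'⟩ := gval j' hj'
      simp only [hg, hx, hx', Option.getD_some] at h
      subst h
      have h2 := hf (hx.trans hx'.symm)
      have heq : ((j.val : ℕ) : ZMod ℓ) = ((j'.val : ℕ) : ZMod ℓ) := add_left_cancel h2
      have := natCast_zmod_inj (lt_trans (ZMod.val_lt j) hdl)
        (lt_trans (ZMod.val_lt j') hdl) heq
      exact ZMod.val_injective d this
  have hu1 : ∀ u : ZMod d, (u + 1 : ZMod d) = ((u.val + 1 : ℕ) : ZMod d) := by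
    intro u
    rw [Nat.cast_add, Nat.cast_one, val_natCast_eq]
  have step : ∀ u : ZMod d, g (u + 1) = (f (s + (u.val : ℕ) + 1)).getD v := by
    intro u
    rcases Nat.lt_or_ge (u.val + 1) d with h | h
    · have hval : (u + 1 : ZMod d).val = u.val + 1 := by
        rw [hu1 u, ZMod.val_cast_of_lt h]
      simp only [hg, hval, Nat.cast_add, Nat.cast_one, ← add_assoc]
    · have hd : u.val + 1 = d := by have := ZMod.val_lt u; omega
      have hz : (u + 1 : ZMod d) = 0 := by
        rw [hu1 u, hd, ZMod.natCast_self]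
      rw [hz, g0]
      have : s + (u.val : ℕ) + 1 = s + ((d : ℕ) : ZMod ℓ) := by
        rw [add_assoc, ← Nat.cast_one, ← Nat.cast_add, hd]
      rw [this, hend1]
  have garc : ∀ u w : ZMod d, cycleOrient (fun _ => c) u w → E (g u) (g w) := by
    intro u w hF
    cases c with
    | true =>
      have hw : w = u + 1 := by
        rcases hF with ⟨_, h⟩ | ⟨h, _⟩
        · exact h
        · simp at h
      subst hw
      have hcl := harc (s + (u.val : ℕ)) (s + (u.val : ℕ) + 1)
        (Or.inl ⟨hc u.val (ZMod.val_lt u), rfl⟩)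
      have := cloneRel_getD hcl
      rw [step u]
      exact this
    | false =>
      have hw : u = w + 1 := by
        rcases hF with ⟨h, _⟩ | ⟨_, h⟩
        · simp at h
        · exact h
      subst hw
      have hcl := harc (s + (w.val : ℕ) + 1) (s + (w.val : ℕ))
        (Or.inr ⟨hc w.val (ZMod.val_lt w), rfl⟩)
      have := cloneRel_getD hcl
      rw [step w]
      exact this
  refine ⟨d, fun _ => c, hd2, hdk, ?_, Or.inl ?_, g, ginj, garc⟩
  · intro i j hij
    cases c <;> simp [cycleArc, Prod.ext_iff] at hij <;> tauto
  · simp [blockCount]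

/-- Lemma 3.2. For `k ≥ 3`, if a digraph `D` without loops or parallel arcs contains no
digraph in `𝒞_k ∪ 𝒞'_k` as a subdigraph, then neither does the digraph obtained from `D`
by cloning any vertex `v`. -/
theorem cloning_preserves_family_freeness
    (k : ℕ) (hk : 3 ≤ k) {V : Type*} (E : V → V → Prop) (hloops : ∀ v, ¬ E v v)
    (hfree : ¬ ContainsFamilyCk k E) (v : V) :
    ¬ ContainsFamilyCk k (cloneRel E v) := by
  rintro ⟨ℓ, o, hl2, hlk, hinjArc, hblk, f, hf, harc⟩
  haveI : NeZero ℓ := ⟨by omega⟩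
  by_cases hA : (∃ a, f a = none) ∧ (∃ b, f b = some v)
  · obtain ⟨⟨a, ha⟩, ⟨b, hb⟩⟩ := hA
    have hab : a ≠ b := fun h => by rw [h, hb] at ha; exact Option.some_ne_none _ ha
    have edge : ∀ i : ZMod ℓ, cycleOrient o i (i + 1) ∨ cycleOrient o (i + 1) i := by
      intro i
      cases h : o i with
      | true => exact Or.inl (Or.inl ⟨h, rfl⟩)
      | false => exact Or.inr (Or.inr ⟨h, rfl⟩)
    have hnadj1 : a ≠ b + 1 := by
      intro h
      have hfb1 : f (b + 1) = none := by rw [← h]; exact ha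
      rcases edge b with h' | h'
      · have := harc b (b + 1) h'
        rw [hb, hfb1] at this
        exact hloops v this
      · have := harc (b + 1) b h'
        rw [hb, hfb1] at this
        exact hloops v this
    have hnadj2 : b ≠ a + 1 := by
      intro h
      have hfa1 : f (a + 1) = some v := by rw [← h]; exact hb
      rcases edge a with h' | h'
      · have := harc a (a + 1) h'
        rw [ha, hfa1] at this
        exact hloops v this
      · have := harc (a + 1) a h'
        rw [ha, hfa1] at this
        exact hloops v this
    set d1 : ℕ := (a - b).val with hd1def
    set d2 : ℕ := (b - a).val with hd2def
    have habz : a - b ≠ 0 := sub_ne_zero.mpr hab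
    have hd1lt : d1 < ℓ := ZMod.val_lt _
    have hd2lt : d2 < ℓ := ZMod.val_lt _
    have hd1ne0 : d1 ≠ 0 := fun h => habz ((ZMod.val_eq_zero _).mp h)
    have hd2ne0 : d2 ≠ 0 := fun h => (sub_ne_zero.mpr (Ne.symm hab)) ((ZMod.val_eq_zero _).mp h)
    have hd1ne1 : d1 ≠ 1 := by
      intro h
      apply hnadj1
      have : a - b = ((1 : ℕ) : ZMod ℓ) := by rw [← h, hd1def, val_natCast_eq]
      rw [Nat.cast_one] at this
      rw [← this]; ring
    have hd2ne1 : d2 ≠ 1 := by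
      intro h
      apply hnadj2
      have : b - a = ((1 : ℕ) : ZMod ℓ) := by rw [← h, hd2def, val_natCast_eq]
      rw [Nat.cast_one] at this
      rw [← this]; ring
    have hsum : d1 + d2 = ℓ := by
      have : b - a = -(a - b) := by ring
      rw [hd2def, this, ZMod.neg_val, if_neg habz, ← hd1def]
      omega
    have hba : b + ((d1 : ℕ) : ZMod ℓ) = a := by
      rw [hd1def, val_natCast_eq]; ring
    have hab' : a + ((d2 : ℕ) : ZMod ℓ) = b := by
      rw [hd2def, val_natCast_eq]; ring
    have hgood : (∀ t : ℕ, t + 1 < d1 → o (b + (t : ℕ)) = o (b + (t : ℕ) + 1)) ∨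
        (∀ t : ℕ, t + 1 < d2 → o (a + (t : ℕ)) = o (a + (t : ℕ) + 1)) := by
      by_contra hcon
      push_neg at hcon
      obtain ⟨⟨t1, ht1, hch1⟩, ⟨t2, ht2, hch2⟩⟩ := hcon
      have hx2 : a + (t2 : ZMod ℓ) = b + ((d1 + t2 : ℕ) : ZMod ℓ) := by
        rw [Nat.cast_add, ← add_assoc, hba]
      have hne : b + (t1 : ZMod ℓ) ≠ a + (t2 : ZMod ℓ) := by
        intro h
        rw [hx2] at h
        have := natCast_zmod_inj (by omega : t1 < ℓ) (by omega : d1 + t2 < ℓ)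
          (add_left_cancel h)
        omega
      have hne2 : a + (t2 : ZMod ℓ) ≠ b + (t1 : ZMod ℓ) + 1 := by
        intro h
        rw [hx2] at h
        have h' : b + ((d1 + t2 : ℕ) : ZMod ℓ) = b + ((t1 + 1 : ℕ) : ZMod ℓ) := by
          rw [h]; push_cast; ring
        have := natCast_zmod_inj (by omega : d1 + t2 < ℓ) (by omega : t1 + 1 < ℓ)
          (add_left_cancel h')
        omega
      have hne3 : b + (t1 : ZMod ℓ) ≠ a + (t2 : ZMod ℓ) + 1 := by
        intro h
        rw [hx2] at h
        have h' : b + ((t1 : ℕ) : ZMod ℓ) = b + ((d1 + t2 + 1 : ℕ) : ZMod ℓ) := by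
          rw [h]; push_cast; ring
        have := natCast_zmod_inj (by omega : t1 < ℓ) (by omega : d1 + t2 + 1 < ℓ)
          (add_left_cancel h')
        omega
      have m1 : (b + (t1 : ZMod ℓ)) ∈ {i : ZMod ℓ | o i ≠ o (i + 1)} := hch1
      have m2 : (a + (t2 : ZMod ℓ)) ∈ {i : ZMod ℓ | o i ≠ o (i + 1)} := hch2
      rcases hblk with h1 | ⟨h2, i0, hi1, hi2⟩
      · by_cases hconst : ∀ i, o i = o 0
        · exact hch1 ((hconst _).trans (hconst _).symm)
        · rw [blockCount, if_neg hconst] at h1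
          obtain ⟨x, hx⟩ := Set.ncard_eq_one.mp h1
          rw [hx, Set.mem_singleton_iff] at m1 m2
          exact hne (m1.trans m2.symm)
      · have hconst : ¬ ∀ i, o i = o 0 := fun hcst => hi1 ((hcst _).trans (hcst _).symm)
        rw [blockCount, if_neg hconst] at h2
        have hsub : ({b + (t1 : ZMod ℓ), a + (t2 : ZMod ℓ)} : Set (ZMod ℓ)) =
            {i : ZMod ℓ | o i ≠ o (i + 1)} := by
          apply Set.eq_of_subset_of_ncard_le
          · intro z hz
            rcases hz with rfl | hz
            · exact m1
            · rw [Set.mem_singleton_iff] at hz; rw [hz]; exact m2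
          · rw [h2, Set.ncard_pair hne]
          · exact Set.toFinite _
        have mi : i0 ∈ ({b + (t1 : ZMod ℓ), a + (t2 : ZMod ℓ)} : Set (ZMod ℓ)) := by
          rw [hsub]; exact hi1
        have hi2' : (i0 + 1) ∈ {i : ZMod ℓ | o i ≠ o (i + 1)} := by
          have h21 : i0 + 1 + 1 = i0 + 2 := by ring
          simp only [Set.mem_setOf_eq, h21]; exact hi2
        have mi1 : i0 + 1 ∈ ({b + (t1 : ZMod ℓ), a + (t2 : ZMod ℓ)} : Set (ZMod ℓ)) := by
          rw [hsub]; exact hi2'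
        have hi01 : i0 ≠ i0 + 1 := by
          intro h
          have h1 : ((0 : ℕ) : ZMod ℓ) = ((1 : ℕ) : ZMod ℓ) := by
            push_cast
            exact (add_eq_left.mp (by rw [← h])).symm
          have := natCast_zmod_inj (by omega : 0 < ℓ) (by omega : 1 < ℓ) h1
          omega
        simp only [Set.mem_insert_iff, Set.mem_singleton_iff] at mi mi1
        rcases mi with h | h <;> rcases mi1 with h' | h'
        · exact hi01 (h.trans h'.symm)
        · exact hne2 (by rw [← h', h])
        · exact hne3 (by rw [← h', h])
        · exact hi01 (h.trans h'.symm)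
    rcases hgood with hg1 | hg2
    · -- use interval [b, b + d1)
      have hc : ∀ t : ℕ, t < d1 → o (b + (t : ℕ)) = o b := by
        intro t
        induction t with
        | zero => intro _; norm_num
        | succ n ih =>
          intro h
          have e1 : ((n + 1 : ℕ) : ZMod ℓ) = ((n : ℕ) : ZMod ℓ) + 1 := by push_cast; ring
          rw [e1, ← add_assoc, ← hg1 n (by omega), ih (by omega)]
      apply hfree
      apply subcycle E v k ℓ o f hf harc b d1 (o b) (by omega) hd1lt (by omega)
      · rw [hb]; rfl
      · rw [hba, ha]; rfl
      · intro t h0 htd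
        constructor
        · intro hn
          have h1 : b + (t : ZMod ℓ) = a := hf (hn.trans ha.symm)
          rw [← hba] at h1
          have := natCast_zmod_inj (by omega : t < ℓ) (by omega : d1 < ℓ)
            (add_left_cancel h1)
          omega
        · intro hv
          have h1 : b + (t : ZMod ℓ) = b := hf (hv.trans hb.symm)
          have h2 : (t : ZMod ℓ) = ((0 : ℕ) : ZMod ℓ) := by
            push_cast; exact add_eq_left.mp h1
          have := natCast_zmod_inj (by omega : t < ℓ) (by omega : 0 < ℓ) h2
          omega
      · exact hc
    · -- use interval [a, a + d2)
      have hc : ∀ t : ℕ, t < d2 → o (a + (t : ℕ)) = o a := by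
        intro t
        induction t with
        | zero => intro _; norm_num
        | succ n ih =>
          intro h
          have e1 : ((n + 1 : ℕ) : ZMod ℓ) = ((n : ℕ) : ZMod ℓ) + 1 := by push_cast; ring
          rw [e1, ← add_assoc, ← hg2 n (by omega), ih (by omega)]
      apply hfree
      apply subcycle E v k ℓ o f hf harc a d2 (o a) (by omega) hd2lt (by omega)
      · rw [ha]; rfl
      · rw [hab', hb]; rfl
      · intro t h0 htd
        constructor
        · intro hn
          have h1 : a + (t : ZMod ℓ) = a := hf (hn.trans ha.symm)
          have h2 : (t : ZMod ℓ) = ((0 : ℕ) : ZMod ℓ) := by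
            push_cast; exact add_eq_left.mp h1
          have := natCast_zmod_inj (by omega : t < ℓ) (by omega : 0 < ℓ) h2
          omega
        · intro hv
          have h1 : a + (t : ZMod ℓ) = b := hf (hv.trans hb.symm)
          rw [← hab'] at h1
          have := natCast_zmod_inj (by omega : t < ℓ) (by omega : d2 < ℓ)
            (add_left_cancel h1)
          omega
      · exact hc
  · -- easy case: the clone vertex and v are not both used
    apply hfree
    refine ⟨ℓ, o, hl2, hlk, hinjArc, hblk, fun i => (f i).getD v, ?_,
      fun u w h => cloneRel_getD (harc u w h)⟩
    intro i j h
    rcases hfi : f i with _ | x <;> rcases hfj : f j with _ | y <;>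
      simp only [hfi, hfj, Option.getD_some, Option.getD_none] at h
    · exact hf (hfi.trans hfj.symm)
    · exact absurd ⟨⟨i, hfi⟩, ⟨j, by rw [hfj, h]⟩⟩ hA
    · exact absurd ⟨⟨j, hfj⟩, ⟨i, by rw [hfi, h]⟩⟩ hA
    · rw [h] at hfi; exact hf (hfi.trans hfj.symm)
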